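/- For all reals τ ≥ 0, μ > 0, σ > 0, α ≥ 0 and every ε > 0 there exists M₀ such that the following holds. Let Z be an abelian group and Δ ⊆ Z a finite set with |Δ| = M ≥ M₀ and E_8(Δ) ≤ M^{4+3τ+σ}. Let D ⊆ Z satisfy M^{τ+α} ≤ |Δ[x]| ≤ 2·M^{τ+α} for every x ∈ D and Σ_{x∈D} |Δ[x]|² ≥ M^{2+τ}. Then at least one of the following holds. (i) (Comity μ:) there exist a real β ≥ τ+α−μ and a set P ⊆ D×D with M^β ≤ |Δ[x] ∩ Δ[y]| ≤ 2·M^β for all (x,y) ∈ P and |P| ≥ M^{3−2α−β−ε}. (ii) There exist a real α' ≤ α − μ + 2σ + ε, a real p' ≥ 1, and a set D' ⊆ Z such that p' ≤ |Δ[x]| ≤ 2·p' for every x ∈ D', Σ_{x∈D'} |Δ[x]| ≥ M^{2−α'}, and Σ_{x∈D'} |Δ[x]|² ≥ M^{2+τ−2σ−ε}. -/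

import Mathlib

/-- The additive energy `E₈(A)`: the number of octuples
`(a₁,…,a₈) ∈ A⁸` with `a₁ + a₂ + a₃ + a₄ = a₅ + a₆ + a₇ + a₈`. -/
def E8 {Z : Type*} [AddCommGroup Z] [DecidableEq Z] (A : Finset Z) : ℕ :=
  ((A ×ˢ A ×ˢ A ×ˢ A ×ˢ A ×ˢ A ×ˢ A ×ˢ A).filter fun p =>
    p.1 + p.2.1 + p.2.2.1 + p.2.2.2.1
      = p.2.2.2.2.1 + p.2.2.2.2.2.1 + p.2.2.2.2.2.2.1 + p.2.2.2.2.2.2.2).card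

/-- `Δ[x] = Δ ∩ (x+Δ)`, the set of elements of `Δ` that are `x` plus an element of `Δ`. -/
def fib {Z : Type*} [AddCommGroup Z] [DecidableEq Z] (Δ : Finset Z) (x : Z) : Finset Z :=
  Δ ∩ Δ.image (x + ·)

namespace ComityAux

open Finset

variable {Z : Type*} [AddCommGroup Z] [DecidableEq Z]

lemma mem_fib {Δ : Finset Z} {a x : Z} : a ∈ fib Δ x ↔ a ∈ Δ ∧ a - x ∈ Δ := by
  simp only [fib, Finset.mem_inter, Finset.mem_image]
  constructor
  · rintro ⟨h1, b, hb, rfl⟩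
    simpa using ⟨h1, hb⟩
  · rintro ⟨h1, h2⟩
    exact ⟨h1, a - x, h2, by abel⟩

lemma fib_subset (Δ : Finset Z) (x : Z) : fib Δ x ⊆ Δ := Finset.inter_subset_left

lemma card_inter_fib_le (Δ : Finset Z) (x y : Z) :
    (fib Δ x ∩ fib Δ y).card ≤ (fib Δ (x - y)).card := by
  apply Finset.card_le_card_of_injOn (fun a => a - y)
  · intro a ha
    simp only [Finset.mem_coe] at ha ⊢
    rw [Finset.mem_inter, mem_fib, mem_fib] at ha
    rw [mem_fib]
    refine ⟨ha.2.2, ?_⟩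
    have : a - y - (x - y) = a - x := by abel
    rw [this]
    exact ha.1.2
  · intro a _ b _ h
    simpa using h

lemma sum_inter_eq (Δ D : Finset Z) :
    ∑ p ∈ D ×ˢ D, (fib Δ p.1 ∩ fib Δ p.2).card
      = ∑ a ∈ Δ, (D.filter fun x => a ∈ fib Δ x).card ^ 2 := by
  rw [Finset.sum_product]
  have key : ∀ x y : Z, (fib Δ x ∩ fib Δ y).card
      = ∑ a ∈ Δ, (if a ∈ fib Δ x then 1 else 0) * (if a ∈ fib Δ y then 1 else 0) := by
    intro x y
    have h : fib Δ x ∩ fib Δ y = Δ.filter (fun a => a ∈ fib Δ x ∧ a ∈ fib Δ y) := by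
      ext a
      simp only [Finset.mem_inter, Finset.mem_filter]
      constructor
      · intro h; exact ⟨fib_subset Δ x h.1, h⟩
      · tauto
    rw [h, Finset.card_filter]
    refine Finset.sum_congr rfl fun a _ => ?_
    by_cases h1 : a ∈ fib Δ x <;> by_cases h2 : a ∈ fib Δ y <;> simp [h1, h2]
  calc ∑ x ∈ D, ∑ y ∈ D, (fib Δ x ∩ fib Δ y).card
      = ∑ x ∈ D, ∑ y ∈ D, ∑ a ∈ Δ, (if a ∈ fib Δ x then 1 else 0) * (if a ∈ fib Δ y then 1 else 0) :=
        Finset.sum_congr rfl fun x _ => Finset.sum_congr rfl fun y _ => key x y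
    _ = ∑ x ∈ D, ∑ a ∈ Δ, ∑ y ∈ D, (if a ∈ fib Δ x then 1 else 0) * (if a ∈ fib Δ y then 1 else 0) :=
        Finset.sum_congr rfl fun x _ => by rw [Finset.sum_comm]
    _ = ∑ a ∈ Δ, ∑ x ∈ D, ∑ y ∈ D, (if a ∈ fib Δ x then 1 else 0) * (if a ∈ fib Δ y then 1 else 0) :=
        by rw [Finset.sum_comm]
    _ = ∑ a ∈ Δ, (D.filter fun x => a ∈ fib Δ x).card ^ 2 := by
        refine Finset.sum_congr rfl fun a _ => ?_
        rw [← Finset.sum_mul_sum, ← Finset.card_filter, sq]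

lemma sum_n_eq (Δ D : Finset Z) :
    ∑ a ∈ Δ, (D.filter fun x => a ∈ fib Δ x).card = ∑ x ∈ D, (fib Δ x).card := by
  have h1 : ∀ a ∈ Δ, (D.filter fun x => a ∈ fib Δ x).card = ∑ x ∈ D, if a ∈ fib Δ x then 1 else 0 :=
    fun a _ => Finset.card_filter _ _
  have h2 : ∀ x ∈ D, (fib Δ x).card = ∑ a ∈ Δ, if a ∈ fib Δ x then 1 else 0 := by
    intro x _
    have h : fib Δ x = Δ.filter (fun a => a ∈ fib Δ x) := by
      ext a
      simp only [Finset.mem_filter]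
      exact ⟨fun h => ⟨fib_subset Δ x h, h⟩, fun h => h.2⟩
    calc (fib Δ x).card = (Δ.filter (fun a => a ∈ fib Δ x)).card := by rw [← h]
      _ = ∑ a ∈ Δ, if a ∈ fib Δ x then 1 else 0 := Finset.card_filter _ _
  rw [Finset.sum_congr rfl h1, Finset.sum_congr rfl h2, Finset.sum_comm]

def Gset (Δ : Finset Z) (s : Z) : Finset (Z × Z × Z × Z) :=
  (Δ ×ˢ Δ ×ˢ Δ ×ˢ Δ).filter fun q => q.1 - q.2.1 + q.2.2.1 - q.2.2.2 = s

lemma G_lower (Δ D : Finset Z) (s : Z) :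
    ∑ p ∈ (D ×ˢ D).filter (fun p => p.1 - p.2 = s),
      (fib Δ p.1).card * (fib Δ p.2).card ≤ (Gset Δ s).card := by
  classical
  set Pd := (D ×ˢ D).filter (fun p : Z × Z => p.1 - p.2 = s) with hPd
  have hcard : (Pd.sigma fun p => fib Δ p.1 ×ˢ fib Δ p.2).card
      = ∑ p ∈ Pd, (fib Δ p.1).card * (fib Δ p.2).card := by
    rw [Finset.card_sigma]
    exact Finset.sum_congr rfl fun p _ => Finset.card_product _ _
  rw [← hcard]
  apply Finset.card_le_card_of_injOn (fun t => (t.2.1, t.2.1 - t.1.1, t.2.2 - t.1.2, t.2.2))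
  · rintro ⟨⟨x, y⟩, ⟨a, b⟩⟩ ht
    simp only [Finset.mem_coe, Finset.mem_sigma, Finset.mem_product] at ht
    obtain ⟨hp, ha, hb⟩ := ht
    rw [hPd, Finset.mem_filter] at hp
    have hxy : x - y = s := hp.2
    rw [mem_fib] at ha hb
    simp only [Finset.mem_coe, Gset, Finset.mem_filter, Finset.mem_product]
    refine ⟨⟨ha.1, ha.2, hb.2, hb.1⟩, ?_⟩
    rw [← hxy]; abel
  · rintro ⟨⟨x, y⟩, ⟨a, b⟩⟩ _ ⟨⟨x', y'⟩, ⟨a', b'⟩⟩ _ h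
    simp only [Prod.mk.injEq] at h
    obtain ⟨h1, h2, h3, h4⟩ := h
    have hx : x = x' := by rw [← h1] at h2; exact sub_right_inj.mp h2
    have hy : y = y' := by rw [← h4] at h3; exact sub_right_inj.mp h3
    subst h1; subst h4; subst hx; subst hy; rfl

lemma G_sq_le_E8 (Δ : Finset Z) (S : Finset Z) :
    ∑ s ∈ S, (Gset Δ s).card ^ 2 ≤ E8 Δ := by
  classical
  have hcard : (S.sigma fun s => Gset Δ s ×ˢ Gset Δ s).card = ∑ s ∈ S, (Gset Δ s).card ^ 2 := by
    rw [Finset.card_sigma]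
    exact Finset.sum_congr rfl fun s _ => by rw [Finset.card_product, sq]
  rw [← hcard, E8]
  apply Finset.card_le_card_of_injOn
    (fun t => (t.2.1.1, t.2.1.2.2.1, t.2.2.2.1, t.2.2.2.2.2,
               t.2.1.2.1, t.2.1.2.2.2, t.2.2.1, t.2.2.2.2.1))
  · rintro ⟨s, ⟨⟨a, b, c, d⟩, ⟨e, f, g, h⟩⟩⟩ ht
    simp only [Finset.mem_coe, Finset.mem_sigma, Finset.mem_product, Gset, Finset.mem_filter] at ht
    obtain ⟨-, ⟨⟨ha, hb, hc, hd⟩, hq⟩, ⟨⟨he, hf, hg, hh⟩, hr⟩⟩ := ht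
    simp only [Finset.mem_coe, Finset.mem_filter, Finset.mem_product]
    refine ⟨⟨ha, hc, hf, hh, hb, hd, he, hg⟩, ?_⟩
    have key : (a + c + f + h) - (b + d + e + g) = (a - b + c - d) - (e - f + g - h) := by abel
    rw [hq, hr, sub_self] at key
    exact sub_eq_zero.mp key
  · rintro ⟨s, ⟨⟨a, b, c, d⟩, ⟨e, f, g, h⟩⟩⟩ ht ⟨s', ⟨⟨a', b', c', d'⟩, ⟨e', f', g', h'⟩⟩⟩ ht' heq
    simp only [Prod.mk.injEq] at heq
    obtain ⟨e1, e2, e3, e4, e5, e6, e7, e8⟩ := heq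
    simp only [Finset.mem_coe, Finset.mem_sigma, Finset.mem_product, Gset,
      Finset.mem_filter] at ht ht'
    have hs : s = s' := by
      rw [← ht.2.1.2, ← ht'.2.1.2, e1, e5, e2, e6]
    subst hs; subst e1; subst e2; subst e3; subst e4; subst e5; subst e6; subst e7; subst e8; rfl

lemma pigeon {ι : Type*} (s : Finset ι) (hs : s.Nonempty) (f : ι → ℝ) (C : ℝ)
    (h : C ≤ ∑ i ∈ s, f i) : ∃ i ∈ s, C / s.card ≤ f i := by
  by_contra h'
  push_neg at h'
  have hlt : ∑ i ∈ s, f i < ∑ i ∈ s, C / s.card := Finset.sum_lt_sum_of_nonempty hs h'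
  rw [Finset.sum_const, nsmul_eq_mul] at hlt
  have hc : (0 : ℝ) < s.card := by
    have := Finset.card_pos.mpr hs
    exact_mod_cast this
  rw [mul_div_cancel₀ _ (ne_of_gt hc)] at hlt
  linarith

lemma growth (ε : ℝ) (hε : 0 < ε) :
    ∃ N : ℕ, 2 ≤ N ∧ ∀ M : ℕ, N ≤ M → (256 : ℝ) * (Nat.log 2 M + 1) ^ 3 ≤ (M : ℝ) ^ ε := by
  set c : ℝ := 6912 * (6 / ε) ^ 3 with hc
  have hcpos : 0 < c := by positivity
  refine ⟨max 3 (⌈c ^ (2 / ε)⌉₊ + 1), by omega, fun M hM => ?_⟩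
  have hM3 : (3 : ℕ) ≤ M := le_trans (le_max_left _ _) hM
  have hMr : (3 : ℝ) ≤ (M : ℝ) := by exact_mod_cast hM3
  have hM0 : (0 : ℝ) < M := by linarith
  have hlog1 : 1 ≤ Real.log M := by
    rw [Real.le_log_iff_exp_le hM0]
    have := Real.exp_one_lt_d9
    linarith
  have hlog0 : 0 ≤ Real.log M := by linarith
  have hk : ((Nat.log 2 M : ℝ) + 1) ≤ 3 * Real.log M := by
    have h2M : (2 : ℝ) ^ (Nat.log 2 M) ≤ (M : ℝ) := by
      exact_mod_cast Nat.pow_log_le_self 2 (by omega)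
    have hlog2 : (Nat.log 2 M : ℝ) * Real.log 2 ≤ Real.log M := by
      rw [← Real.log_pow]
      exact Real.log_le_log (by positivity) h2M
    have h2 : (0.6931471803 : ℝ) < Real.log 2 := Real.log_two_gt_d9
    have hk0 : (0:ℝ) ≤ (Nat.log 2 M : ℝ) := by positivity
    nlinarith [hk0]
  have hcube : (256 : ℝ) * (Nat.log 2 M + 1) ^ 3 ≤ 6912 * Real.log M ^ 3 := by
    have h1 : ((Nat.log 2 M : ℝ) + 1) ^ 3 ≤ (3 * Real.log M) ^ 3 := by
      apply pow_le_pow_left₀ (by positivity) hk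
    calc (256 : ℝ) * (Nat.log 2 M + 1) ^ 3 ≤ 256 * (3 * Real.log M) ^ 3 := by linarith
      _ = 6912 * Real.log M ^ 3 := by ring
  have hstep3 : Real.log M ≤ (6 / ε) * (M : ℝ) ^ (ε / 6) := by
    have h := Real.log_le_rpow_div (le_of_lt hM0) (show (0:ℝ) < ε / 6 by positivity)
    calc Real.log M ≤ (M : ℝ) ^ (ε / 6) / (ε / 6) := h
      _ = (6 / ε) * (M : ℝ) ^ (ε / 6) := by field_simp
  have hpow : ((M : ℝ) ^ (ε / 6)) ^ 3 = (M : ℝ) ^ (ε / 2) := by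
    rw [← Real.rpow_natCast ((M : ℝ) ^ (ε / 6)) 3, ← Real.rpow_mul (le_of_lt hM0)]
    push_cast
    congr 1
    ring
  have hlog3 : 6912 * Real.log M ^ 3 ≤ c * (M : ℝ) ^ (ε / 2) := by
    have h1 : Real.log M ^ 3 ≤ ((6 / ε) * (M : ℝ) ^ (ε / 6)) ^ 3 :=
      pow_le_pow_left₀ hlog0 hstep3 3
    calc 6912 * Real.log M ^ 3 ≤ 6912 * ((6 / ε) * (M : ℝ) ^ (ε / 6)) ^ 3 := by linarith
      _ = c * ((M : ℝ) ^ (ε / 6)) ^ 3 := by ring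
      _ = c * (M : ℝ) ^ (ε / 2) := by rw [hpow]
  have hstep4 : c ≤ (M : ℝ) ^ (ε / 2) := by
    have hceil : (c ^ (2 / ε) : ℝ) ≤ (M : ℝ) := by
      have h1 : (⌈c ^ (2 / ε)⌉₊ : ℝ) ≤ M := by
        have h2 : ⌈c ^ (2 / ε)⌉₊ + 1 ≤ M := le_trans (le_max_right _ _) hM
        exact_mod_cast le_trans (Nat.le_succ _) h2
      exact le_trans (Nat.le_ceil _) h1
    calc c = (c ^ (2 / ε)) ^ (ε / 2) := by
          rw [← Real.rpow_mul (le_of_lt hcpos)]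
          rw [div_mul_div_comm]
          norm_num
          rw [mul_comm, div_self (by positivity), Real.rpow_one]
      _ ≤ ((M : ℝ)) ^ (ε / 2) := Real.rpow_le_rpow (by positivity) hceil (by positivity)
  calc (256 : ℝ) * (Nat.log 2 M + 1) ^ 3 ≤ c * (M : ℝ) ^ (ε / 2) := le_trans hcube hlog3
    _ ≤ (M : ℝ) ^ (ε / 2) * (M : ℝ) ^ (ε / 2) :=
        mul_le_mul_of_nonneg_right hstep4 (by positivity)
    _ = (M : ℝ) ^ ε := by rw [← Real.rpow_add hM0]; ring_nf

end ComityAux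

open ComityAux

set_option maxHeartbeats 1000000 in
/-- The comity dichotomy lemma: an additive structure at height `α` on an additively
nonsmoothing set either has comity `μ`, or can be replaced by an additive structure of
height at most `α − μ + 2σ + ε` retaining most of the energy. -/
theorem comity_dichotomy (τ μ σ α ε : ℝ) (hτ : 0 ≤ τ) (hμ : 0 < μ) (hσ : 0 < σ)
    (hα : 0 ≤ α) (hε : 0 < ε) :
    ∃ M₀ : ℕ, ∀ (Z : Type*) [AddCommGroup Z] [DecidableEq Z] (Δ : Finset Z),
      M₀ ≤ Δ.card →
      (E8 Δ : ℝ) ≤ (Δ.card : ℝ) ^ ((4 : ℝ) + 3 * τ + σ) →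
      ∀ D : Finset Z,
        (∀ x ∈ D, (Δ.card : ℝ) ^ (τ + α) ≤ ((fib Δ x).card : ℝ) ∧
          ((fib Δ x).card : ℝ) ≤ 2 * (Δ.card : ℝ) ^ (τ + α)) →
        (Δ.card : ℝ) ^ ((2 : ℝ) + τ) ≤ ∑ x ∈ D, ((fib Δ x).card : ℝ) ^ 2 →
        (∃ β : ℝ, τ + α - μ ≤ β ∧ ∃ P : Finset (Z × Z), P ⊆ D ×ˢ D ∧
            (∀ p ∈ P, (Δ.card : ℝ) ^ β ≤ ((fib Δ p.1 ∩ fib Δ p.2).card : ℝ) ∧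
              ((fib Δ p.1 ∩ fib Δ p.2).card : ℝ) ≤ 2 * (Δ.card : ℝ) ^ β) ∧
            (Δ.card : ℝ) ^ ((3 : ℝ) - 2 * α - β - ε) ≤ (P.card : ℝ)) ∨
        (∃ (α' p' : ℝ) (D' : Finset Z),
            α' ≤ α - μ + 2 * σ + ε ∧ 1 ≤ p' ∧
            (∀ x ∈ D', p' ≤ ((fib Δ x).card : ℝ) ∧ ((fib Δ x).card : ℝ) ≤ 2 * p') ∧
            (Δ.card : ℝ) ^ ((2 : ℝ) - α') ≤ ∑ x ∈ D', ((fib Δ x).card : ℝ) ∧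
            (Δ.card : ℝ) ^ ((2 : ℝ) + τ - 2 * σ - ε)
              ≤ ∑ x ∈ D', ((fib Δ x).card : ℝ) ^ 2) := by
  classical
  obtain ⟨N, hN2, hNgrow⟩ := ComityAux.growth ε hε
  refine ⟨N, ?_⟩
  intro Z _ _ Δ hMN hE8bd D hD hEnergy
  have hJgrowN := hNgrow Δ.card hMN
  set M : ℕ := Δ.card with hMdef
  set m : ℝ := (M : ℝ) with hmdef
  have hM2 : 2 ≤ M := le_trans hN2 hMN
  have hm2 : (2:ℝ) ≤ m := by rw [hmdef]; exact_mod_cast hM2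
  have hm0 : (0:ℝ) < m := by linarith
  have hm1 : (1:ℝ) < m := by linarith
  have hm1' : (1:ℝ) ≤ m := by linarith
  have hrp : ∀ a b : ℝ, m ^ a * m ^ b = m ^ (a + b) := fun a b => (Real.rpow_add hm0 a b).symm
  set J : ℕ := Nat.log 2 M + 1 with hJdef
  have hJ1 : (1:ℝ) ≤ (J:ℝ) := by
    have h : 1 ≤ J := Nat.le_add_left 1 _
    exact_mod_cast h
  have hJ0 : (0:ℝ) < (J:ℝ) := by linarith
  have hJgrow : (256:ℝ) * ((J:ℝ))^3 ≤ m ^ ε := by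
    rw [hJdef, hmdef]
    push_cast at hJgrowN ⊢
    exact hJgrowN
  have hJcube : (J:ℝ) ≤ (J:ℝ)^3 := by
    have h1 : (1:ℝ) ≤ (J:ℝ)^2 := by
      have h2 : (1:ℝ)*1 ≤ (J:ℝ)*(J:ℝ) := mul_le_mul hJ1 hJ1 (by norm_num) (by linarith)
      calc (1:ℝ) = 1*1 := by norm_num
        _ ≤ (J:ℝ)*(J:ℝ) := h2
        _ = (J:ℝ)^2 := (pow_two _).symm
    calc (J:ℝ) = 1 * (J:ℝ) := (one_mul _).symm
      _ ≤ (J:ℝ)^2 * (J:ℝ) := mul_le_mul_of_nonneg_right h1 (by linarith)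
      _ = (J:ℝ)^3 := by ring
  have hJ3nn : (0:ℝ) ≤ (J:ℝ)^3 := by linarith
  set T : ℝ := m ^ (τ + α) with hTdef
  have hT0 : (0:ℝ) < T := by rw [hTdef]; exact Real.rpow_pos_of_pos hm0 _
  have hfib_le : ∀ s : Z, (fib Δ s).card ≤ M := fun s => Finset.card_le_card (fib_subset Δ s)
  -- Step 1 : mass lower bound
  have hmass : m ^ ((2:ℝ) + τ) ≤ 2 * T * ∑ x ∈ D, ((fib Δ x).card : ℝ) := by
    have h1 : ∑ x ∈ D, ((fib Δ x).card : ℝ)^2 ≤ ∑ x ∈ D, 2*T*((fib Δ x).card:ℝ) := by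
      apply Finset.sum_le_sum
      intro x hx
      have h2 := (hD x hx).2
      have h0 : (0:ℝ) ≤ ((fib Δ x).card:ℝ) := Nat.cast_nonneg _
      calc ((fib Δ x).card:ℝ)^2 = ((fib Δ x).card:ℝ) * ((fib Δ x).card:ℝ) := pow_two _
        _ ≤ (2*T) * ((fib Δ x).card:ℝ) := mul_le_mul_of_nonneg_right h2 h0
        _ = 2*T*((fib Δ x).card:ℝ) := by ring
    rw [← Finset.mul_sum] at h1
    exact le_trans hEnergy h1
  have hsum0 : (0:ℝ) ≤ ∑ x ∈ D, ((fib Δ x).card : ℝ) :=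
    Finset.sum_nonneg fun x _ => Nat.cast_nonneg _
  -- Step 2 : lower bound on the pair sum C
  set C : ℝ := ∑ p ∈ D ×ˢ D, ((fib Δ p.1 ∩ fib Δ p.2).card : ℝ) with hCdef
  have hC0 : (0:ℝ) ≤ C := by
    rw [hCdef]; exact Finset.sum_nonneg fun p _ => Nat.cast_nonneg _
  have hCS : (∑ x ∈ D, ((fib Δ x).card : ℝ))^2 ≤ m * C := by
    have h1 : (∑ a ∈ Δ, ((D.filter fun x => a ∈ fib Δ x).card : ℝ))^2
        ≤ (Δ.card : ℝ) * ∑ a ∈ Δ, ((D.filter fun x => a ∈ fib Δ x).card : ℝ)^2 :=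
      sq_sum_le_card_mul_sum_sq
    have e1 : (∑ a ∈ Δ, ((D.filter fun x => a ∈ fib Δ x).card : ℝ))
        = ∑ x ∈ D, ((fib Δ x).card : ℝ) := by
      exact_mod_cast congrArg (Nat.cast : ℕ → ℝ) (sum_n_eq Δ D)
    have e2 : (∑ a ∈ Δ, ((D.filter fun x => a ∈ fib Δ x).card : ℝ)^2) = C := by
      rw [hCdef]
      exact_mod_cast (congrArg (Nat.cast : ℕ → ℝ) (sum_inter_eq Δ D)).symm
    rw [e1, e2] at h1
    exact h1
  have hC1 : m ^ ((3:ℝ) - 2*α) ≤ 4 * C := by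
    have hTTm : T * T * m = m ^ ((1:ℝ) + 2*τ + 2*α) := by
      rw [hTdef]
      calc m ^ (τ+α) * m ^ (τ+α) * m = m ^ (τ+α) * m ^ (τ+α) * m ^ (1:ℝ) := by
            rw [Real.rpow_one]
        _ = m ^ ((1:ℝ) + 2*τ + 2*α) := by rw [hrp, hrp]; congr 1; ring
    have key : m ^ ((3:ℝ) - 2*α) * m ^ ((1:ℝ) + 2*τ + 2*α)
        ≤ (4 * C) * m ^ ((1:ℝ) + 2*τ + 2*α) := by
      have e1 : m ^ ((3:ℝ) - 2*α) * m ^ ((1:ℝ) + 2*τ + 2*α)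
          = m ^ ((2:ℝ)+τ) * m ^ ((2:ℝ)+τ) := by rw [hrp, hrp]; congr 1; ring
      rw [e1]
      have h2 : m ^ ((2:ℝ)+τ) * m ^ ((2:ℝ)+τ)
          ≤ (2 * T * ∑ x ∈ D, ((fib Δ x).card : ℝ)) * (2 * T * ∑ x ∈ D, ((fib Δ x).card : ℝ)) :=
        mul_le_mul hmass hmass (Real.rpow_nonneg hm0.le _)
          (mul_nonneg (mul_nonneg (by norm_num) hT0.le) hsum0)
      have h4 : 4 * (T*T) * (∑ x ∈ D, ((fib Δ x).card : ℝ))^2 ≤ 4 * (T*T) * (m * C) :=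
        mul_le_mul_of_nonneg_left hCS (mul_nonneg (by norm_num) (mul_nonneg hT0.le hT0.le))
      calc m ^ ((2:ℝ)+τ) * m ^ ((2:ℝ)+τ)
          ≤ (2 * T * ∑ x ∈ D, ((fib Δ x).card : ℝ)) * (2 * T * ∑ x ∈ D, ((fib Δ x).card : ℝ)) :=
            h2
        _ = 4 * (T*T) * (∑ x ∈ D, ((fib Δ x).card : ℝ))^2 := by ring
        _ ≤ 4 * (T*T) * (m * C) := h4
        _ = (4*C) * (T*T*m) := by ring
        _ = (4*C) * m ^ ((1:ℝ) + 2*τ + 2*α) := by rw [hTTm]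
    exact le_of_mul_le_mul_right key (Real.rpow_pos_of_pos hm0 _)
  -- Step 3 : dyadic pigeonhole on the pairs
  set B := (D ×ˢ D).filter (fun p => 0 < (fib Δ p.1 ∩ fib Δ p.2).card) with hBdef
  have hCB : ∑ p ∈ B, ((fib Δ p.1 ∩ fib Δ p.2).card : ℝ) = C := by
    rw [hBdef, hCdef]
    apply Finset.sum_filter_of_ne
    intro p _ hne
    refine Nat.pos_of_ne_zero fun h0 => hne ?_
    rw [h0]
    norm_num
  have hmapsB : ∀ p ∈ B, Nat.log 2 ((fib Δ p.1 ∩ fib Δ p.2).card) ∈ Finset.range J := by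
    intro p _
    rw [Finset.mem_range, hJdef]
    have h1 : (fib Δ p.1 ∩ fib Δ p.2).card ≤ M :=
      le_trans (Finset.card_le_card Finset.inter_subset_left) (hfib_le p.1)
    exact Nat.lt_succ_of_le (Nat.log_mono_right h1)
  have hfiber : ∑ j ∈ Finset.range J,
      ∑ p ∈ B.filter (fun p => Nat.log 2 ((fib Δ p.1 ∩ fib Δ p.2).card) = j),
        ((fib Δ p.1 ∩ fib Δ p.2).card : ℝ) = C := by
    rw [← hCB]
    exact Finset.sum_fiberwise_of_maps_to hmapsB _
  obtain ⟨j, hjmem, hjsum⟩ := pigeon (Finset.range J)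
    ⟨0, Finset.mem_range.mpr (by rw [hJdef]; exact Nat.succ_pos _)⟩ _ C
    (le_of_eq hfiber.symm)
  rw [Finset.card_range] at hjsum
  set P := B.filter (fun p => Nat.log 2 ((fib Δ p.1 ∩ fib Δ p.2).card) = j) with hPdef
  set Q : ℝ := (2:ℝ)^j with hQdef
  have hQ0 : (0:ℝ) < Q := by rw [hQdef]; positivity
  have hQ1 : (1:ℝ) ≤ Q := by
    rw [hQdef]
    exact_mod_cast Nat.one_le_two_pow (n := j)
  have hPQlow : ∀ p ∈ P, Q ≤ ((fib Δ p.1 ∩ fib Δ p.2).card : ℝ) := by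
    intro p hp
    rw [hPdef, Finset.mem_filter] at hp
    obtain ⟨hpB, hplog⟩ := hp
    rw [hBdef, Finset.mem_filter] at hpB
    have h1 : 2 ^ j ≤ (fib Δ p.1 ∩ fib Δ p.2).card := by
      rw [← hplog]
      exact Nat.pow_log_le_self 2 (Nat.pos_iff_ne_zero.mp hpB.2)
    rw [hQdef]
    exact_mod_cast h1
  have hPQhigh : ∀ p ∈ P, ((fib Δ p.1 ∩ fib Δ p.2).card : ℝ) ≤ 2 * Q := by
    intro p hp
    rw [hPdef, Finset.mem_filter] at hp
    have h1 : (fib Δ p.1 ∩ fib Δ p.2).card < 2 ^ (j+1) := by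
      rw [← hp.2]
      exact Nat.lt_pow_succ_log_self (by norm_num) _
    have h2 : ((fib Δ p.1 ∩ fib Δ p.2).card : ℝ) < (2:ℝ)^(j+1) := by exact_mod_cast h1
    rw [hQdef]
    rw [pow_succ] at h2
    linarith
  have hPsub : P ⊆ D ×ˢ D :=
    Finset.Subset.trans (Finset.filter_subset _ _) (Finset.filter_subset _ _)
  have hPc0 : (0:ℝ) ≤ (P.card:ℝ) := Nat.cast_nonneg _
  have hkey1 : m ^ ((3:ℝ) - 2*α) ≤ 8 * (J:ℝ) * Q * (P.card:ℝ) := by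
    have hPsum_le : ∑ p ∈ P, ((fib Δ p.1 ∩ fib Δ p.2).card : ℝ) ≤ (P.card:ℝ) * (2*Q) := by
      calc ∑ p ∈ P, ((fib Δ p.1 ∩ fib Δ p.2).card : ℝ) ≤ ∑ _p ∈ P, 2*Q :=
            Finset.sum_le_sum hPQhigh
        _ = (P.card:ℝ) * (2*Q) := by rw [Finset.sum_const, nsmul_eq_mul]
    have h1 : C / (J:ℝ) ≤ (P.card:ℝ) * (2*Q) := le_trans hjsum hPsum_le
    rw [div_le_iff₀ hJ0] at h1
    calc m ^ ((3:ℝ)-2*α) ≤ 4*C := hC1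
      _ ≤ 4*((P.card:ℝ) * (2*Q) * (J:ℝ)) := by linarith
      _ = 8 * (J:ℝ) * Q * (P.card:ℝ) := by ring
  by_cases hcase : m ^ (τ + α - μ) ≤ Q
  · -- Case A : comity
    left
    have hmQ : m ^ Real.logb m Q = Q := Real.rpow_logb hm0 (ne_of_gt hm1) hQ0
    refine ⟨Real.logb m Q, ?_, P, hPsub, ?_, ?_⟩
    · have h1 : Real.logb m (m ^ (τ + α - μ)) ≤ Real.logb m Q :=
        Real.logb_le_logb_of_le hm1 (Real.rpow_pos_of_pos hm0 _) hcase
      rwa [Real.logb_rpow hm0 (ne_of_gt hm1)] at h1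
    · intro p hp
      rw [hmQ]
      exact ⟨hPQlow p hp, hPQhigh p hp⟩
    · have hJ8 : 8*(J:ℝ) ≤ m ^ ε := by linarith [hJgrow, hJcube]
      have key : m ^ ((3:ℝ) - 2*α - Real.logb m Q - ε) * (m ^ ε * m ^ Real.logb m Q)
          ≤ (P.card:ℝ) * (m ^ ε * m ^ Real.logb m Q) := by
        have e1 : m ^ ((3:ℝ)-2*α-Real.logb m Q-ε) * (m^ε * m^(Real.logb m Q))
            = m ^ ((3:ℝ)-2*α) := by rw [hrp, hrp]; congr 1; ring
        rw [e1]
        have h2 : (8*(J:ℝ)) * (Q * (P.card:ℝ)) ≤ m^ε * (Q * (P.card:ℝ)) :=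
          mul_le_mul_of_nonneg_right hJ8 (mul_nonneg hQ0.le hPc0)
        calc m ^ ((3:ℝ)-2*α) ≤ 8*(J:ℝ)*Q*(P.card:ℝ) := hkey1
          _ = (8*(J:ℝ)) * (Q * (P.card:ℝ)) := by ring
          _ ≤ m^ε * (Q * (P.card:ℝ)) := h2
          _ = (P.card:ℝ) * (m^ε * m^(Real.logb m Q)) := by rw [hmQ]; ring
      exact le_of_mul_le_mul_right key
        (mul_pos (Real.rpow_pos_of_pos hm0 _) (Real.rpow_pos_of_pos hm0 _))
  · -- Case B : new structure at lower height
    right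
    push_neg at hcase
    set S' := P.image (fun p : Z × Z => p.1 - p.2) with hS'def
    have hwsum : (P.card : ℝ) = ∑ s ∈ S', ((P.filter (fun p => p.1 - p.2 = s)).card : ℝ) := by
      exact_mod_cast congrArg (Nat.cast : ℕ → ℝ)
        (Finset.card_eq_sum_card_image (fun p : Z × Z => p.1 - p.2) P)
    have hCS2 : (P.card:ℝ)^2
        ≤ (S'.card:ℝ) * ∑ s ∈ S', ((P.filter (fun p => p.1 - p.2 = s)).card:ℝ)^2 := by
      rw [hwsum]
      exact sq_sum_le_card_mul_sum_sq
    have hsumw_le : ∑ s ∈ S', ((P.filter (fun p => p.1 - p.2 = s)).card:ℝ)^2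
        ≤ ∑ s ∈ S', (((D ×ˢ D).filter (fun p => p.1 - p.2 = s)).card:ℝ)^2 := by
      apply Finset.sum_le_sum
      intro s _
      have h1 : (P.filter (fun p => p.1 - p.2 = s)).card
          ≤ ((D ×ˢ D).filter (fun p => p.1 - p.2 = s)).card :=
        Finset.card_le_card (Finset.monotone_filter_left _ hPsub)
      have h2 : ((P.filter (fun p => p.1 - p.2 = s)).card : ℝ)
          ≤ (((D ×ˢ D).filter (fun p => p.1 - p.2 = s)).card : ℝ) := by exact_mod_cast h1
      exact pow_le_pow_left₀ (Nat.cast_nonneg _) h2 2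
    have hrE8 : T^4 * ∑ s ∈ S', (((D ×ˢ D).filter (fun p => p.1 - p.2 = s)).card:ℝ)^2
        ≤ m ^ ((4:ℝ) + 3*τ + σ) := by
      have h1 : ∀ s ∈ S', T^2 * (((D ×ˢ D).filter (fun p => p.1-p.2=s)).card:ℝ)
          ≤ ((Gset Δ s).card:ℝ) := by
        intro s _
        have h2 : ∑ _p ∈ (D ×ˢ D).filter (fun p => p.1-p.2=s), T*T
            ≤ ∑ p ∈ (D ×ˢ D).filter (fun p => p.1-p.2=s),
                ((fib Δ p.1).card:ℝ)*((fib Δ p.2).card:ℝ) := by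
          apply Finset.sum_le_sum
          intro p hp
          rw [Finset.mem_filter, Finset.mem_product] at hp
          have ha := (hD p.1 hp.1.1).1
          have hb := (hD p.2 hp.1.2).1
          exact mul_le_mul ha hb hT0.le (le_trans hT0.le ha)
        have h3 : ∑ p ∈ (D ×ˢ D).filter (fun p => p.1-p.2=s),
              ((fib Δ p.1).card:ℝ)*((fib Δ p.2).card:ℝ) ≤ ((Gset Δ s).card:ℝ) := by
          have h3' := G_lower Δ D s
          have h3'' : ((∑ p ∈ (D ×ˢ D).filter (fun p => p.1-p.2=s),
              (fib Δ p.1).card * (fib Δ p.2).card : ℕ) : ℝ) ≤ ((Gset Δ s).card:ℝ) := by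
            exact_mod_cast h3'
          push_cast at h3''
          exact h3''
        rw [Finset.sum_const, nsmul_eq_mul] at h2
        calc T^2 * (((D ×ˢ D).filter (fun p => p.1-p.2=s)).card:ℝ)
            = (((D ×ˢ D).filter (fun p => p.1-p.2=s)).card:ℝ) * (T*T) := by ring
          _ ≤ ∑ p ∈ (D ×ˢ D).filter (fun p => p.1-p.2=s),
                ((fib Δ p.1).card:ℝ)*((fib Δ p.2).card:ℝ) := h2
          _ ≤ ((Gset Δ s).card:ℝ) := h3
      have h4 : ∑ s ∈ S', (T^2 * (((D ×ˢ D).filter (fun p => p.1-p.2=s)).card:ℝ))^2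
          ≤ ∑ s ∈ S', ((Gset Δ s).card:ℝ)^2 := by
        apply Finset.sum_le_sum
        intro s hs
        exact pow_le_pow_left₀ (mul_nonneg (pow_nonneg hT0.le 2) (Nat.cast_nonneg _)) (h1 s hs) 2
      have h5 : ∑ s ∈ S', ((Gset Δ s).card:ℝ)^2 ≤ (E8 Δ : ℝ) := by
        exact_mod_cast G_sq_le_E8 Δ S'
      have h6 : ∑ s ∈ S', (T^2 * (((D ×ˢ D).filter (fun p => p.1-p.2=s)).card:ℝ))^2
          = T^4 * ∑ s ∈ S', (((D ×ˢ D).filter (fun p => p.1-p.2=s)).card:ℝ)^2 := by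
        rw [Finset.mul_sum]
        apply Finset.sum_congr rfl
        intro s _
        ring
      rw [h6] at h4
      calc T^4 * ∑ s ∈ S', (((D ×ˢ D).filter (fun p => p.1-p.2=s)).card:ℝ)^2
          ≤ ∑ s ∈ S', ((Gset Δ s).card:ℝ)^2 := h4
        _ ≤ (E8 Δ : ℝ) := h5
        _ ≤ m ^ ((4:ℝ) + 3*τ + σ) := hE8bd
    -- lower bound on S'.card
    have hT4 : T^4 = m ^ (4*τ + 4*α) := by
      rw [hTdef, ← Real.rpow_natCast (m ^ (τ+α)) 4, ← Real.rpow_mul hm0.le]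
      push_cast
      congr 1
      ring
    have hS'c0 : (0:ℝ) ≤ (S'.card:ℝ) := Nat.cast_nonneg _
    have hNS : m ^ ((2:ℝ) + τ - σ) ≤ 64 * (J:ℝ)^2 * Q^2 * (S'.card:ℝ) := by
      have hsq : m^((3:ℝ)-2*α) * m^((3:ℝ)-2*α)
          ≤ (8*(J:ℝ)*Q*(P.card:ℝ)) * (8*(J:ℝ)*Q*(P.card:ℝ)) :=
        mul_le_mul hkey1 hkey1 (Real.rpow_nonneg hm0.le _)
          (mul_nonneg (mul_nonneg (mul_nonneg (by norm_num) (by linarith)) hQ0.le) hPc0)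
      have hPc2 : T^4 * (P.card:ℝ)^2 ≤ (S'.card:ℝ) * m ^ ((4:ℝ) + 3*τ + σ) := by
        have h7 : (P.card:ℝ)^2
            ≤ (S'.card:ℝ) * ∑ s ∈ S', (((D ×ˢ D).filter (fun p => p.1 - p.2 = s)).card:ℝ)^2 :=
          le_trans hCS2 (mul_le_mul_of_nonneg_left hsumw_le hS'c0)
        calc T^4 * (P.card:ℝ)^2
            ≤ T^4 * ((S'.card:ℝ)
                * ∑ s ∈ S', (((D ×ˢ D).filter (fun p => p.1 - p.2 = s)).card:ℝ)^2) :=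
              mul_le_mul_of_nonneg_left h7 (pow_nonneg hT0.le 4)
          _ = (S'.card:ℝ) * (T^4
                * ∑ s ∈ S', (((D ×ˢ D).filter (fun p => p.1 - p.2 = s)).card:ℝ)^2) := by ring
          _ ≤ (S'.card:ℝ) * m ^ ((4:ℝ) + 3*τ + σ) :=
              mul_le_mul_of_nonneg_left hrE8 hS'c0
      have key : m ^ ((2:ℝ)+τ-σ) * m ^ ((4:ℝ)+3*τ+σ)
          ≤ (64 * (J:ℝ)^2 * Q^2 * (S'.card:ℝ)) * m ^ ((4:ℝ)+3*τ+σ) := by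
        have e1 : m ^ ((2:ℝ)+τ-σ) * m ^ ((4:ℝ)+3*τ+σ)
            = m^((3:ℝ)-2*α) * m^((3:ℝ)-2*α) * m ^ (4*τ+4*α) := by
          rw [hrp, hrp, hrp]; congr 1; ring
        rw [e1, ← hT4]
        calc m^((3:ℝ)-2*α) * m^((3:ℝ)-2*α) * T^4
            ≤ (8*(J:ℝ)*Q*(P.card:ℝ)) * (8*(J:ℝ)*Q*(P.card:ℝ)) * T^4 :=
              mul_le_mul_of_nonneg_right hsq (pow_nonneg hT0.le 4)
          _ = (64*(J:ℝ)^2*Q^2) * (T^4 * (P.card:ℝ)^2) := by ring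
          _ ≤ (64*(J:ℝ)^2*Q^2) * ((S'.card:ℝ) * m ^ ((4:ℝ)+3*τ+σ)) :=
              mul_le_mul_of_nonneg_left hPc2
                (mul_nonneg (mul_nonneg (by norm_num) (pow_nonneg (by linarith) 2))
                  (pow_nonneg hQ0.le 2))
          _ = (64 * (J:ℝ)^2 * Q^2 * (S'.card:ℝ)) * m ^ ((4:ℝ)+3*τ+σ) := by ring
      exact le_of_mul_le_mul_right key (Real.rpow_pos_of_pos hm0 _)
    -- fibers of elements of S' are at least Q
    have hfibQ : ∀ s ∈ S', Q ≤ ((fib Δ s).card : ℝ) := by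
      intro s hs
      rw [hS'def, Finset.mem_image] at hs
      obtain ⟨p, hpP, rfl⟩ := hs
      have h1 := hPQlow p hpP
      have h2 : ((fib Δ p.1 ∩ fib Δ p.2).card : ℝ) ≤ ((fib Δ (p.1-p.2)).card : ℝ) := by
        exact_mod_cast card_inter_fib_le Δ p.1 p.2
      linarith
    -- pigeonhole on fiber sizes
    have hmapsS : ∀ s ∈ S', Nat.log 2 ((fib Δ s).card) ∈ Finset.range J := by
      intro s _
      rw [Finset.mem_range, hJdef]
      exact Nat.lt_succ_of_le (Nat.log_mono_right (hfib_le s))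
    have hScount : ((S'.card : ℕ):ℝ)
        = ∑ k ∈ Finset.range J,
            ((S'.filter (fun s => Nat.log 2 ((fib Δ s).card) = k)).card : ℝ) := by
      exact_mod_cast congrArg (Nat.cast : ℕ → ℝ) (Finset.card_eq_sum_card_fiberwise hmapsS)
    obtain ⟨k, hkmem, hksum⟩ := pigeon (Finset.range J)
      ⟨0, Finset.mem_range.mpr (by rw [hJdef]; exact Nat.succ_pos _)⟩ _ ((S'.card : ℕ):ℝ)
      (le_of_eq hScount)
    rw [Finset.card_range] at hksum
    set D' := S'.filter (fun s => Nat.log 2 ((fib Δ s).card) = k) with hD'def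
    set R : ℝ := (2:ℝ)^k with hRdef
    have hR0 : (0:ℝ) < R := by rw [hRdef]; positivity
    have hR1 : (1:ℝ) ≤ R := by
      rw [hRdef]
      exact_mod_cast Nat.one_le_two_pow (n := k)
    have hfibR : ∀ s ∈ D', R ≤ ((fib Δ s).card:ℝ) ∧ ((fib Δ s).card:ℝ) ≤ 2*R := by
      intro s hs
      rw [hD'def, Finset.mem_filter] at hs
      have hpos : (fib Δ s).card ≠ 0 := by
        intro h0
        have h1 := hfibQ s hs.1
        rw [h0] at h1
        push_cast at h1
        linarith
      constructor
      · have h1 : 2 ^ k ≤ (fib Δ s).card := by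
          rw [← hs.2]
          exact Nat.pow_log_le_self 2 hpos
        rw [hRdef]
        exact_mod_cast h1
      · have h1 : (fib Δ s).card < 2 ^ (k+1) := by
          rw [← hs.2]
          exact Nat.lt_pow_succ_log_self (by norm_num) _
        have h2 : ((fib Δ s).card : ℝ) < (2:ℝ)^(k+1) := by exact_mod_cast h1
        rw [hRdef]
        rw [pow_succ] at h2
        linarith
    have hNS0 : (0:ℝ) < (S'.card:ℝ) := by
      by_contra hcon
      push_neg at hcon
      have h1 : (S'.card:ℝ) = 0 := le_antisymm hcon hS'c0
      rw [h1, mul_zero] at hNS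
      have h2 : (0:ℝ) < m ^ ((2:ℝ)+τ-σ) := Real.rpow_pos_of_pos hm0 _
      linarith
    have hD'0 : (0:ℝ) < (D'.card:ℝ) := lt_of_lt_of_le (div_pos hNS0 hJ0) hksum
    have hD'c0 : (0:ℝ) ≤ (D'.card:ℝ) := hD'0.le
    obtain ⟨s₀, hs₀⟩ := Finset.card_pos.mp (by exact_mod_cast hD'0)
    have hQ2R : Q ≤ 2*R := by
      have h1 := hfibQ s₀ ((Finset.filter_subset _ _) hs₀)
      have h2 := (hfibR s₀ hs₀).2
      linarith
    have hJD : (S'.card:ℝ) ≤ (D'.card:ℝ) * (J:ℝ) := by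
      rw [div_le_iff₀ hJ0] at hksum
      linarith
    have hmassR : (D'.card:ℝ) * R ≤ ∑ s ∈ D', ((fib Δ s).card:ℝ) := by
      calc (D'.card:ℝ) * R = ∑ _s ∈ D', R := by rw [Finset.sum_const, nsmul_eq_mul]
        _ ≤ ∑ s ∈ D', ((fib Δ s).card:ℝ) := Finset.sum_le_sum (fun s hs => (hfibR s hs).1)
    have henergyR : (D'.card:ℝ) * R^2 ≤ ∑ s ∈ D', ((fib Δ s).card:ℝ)^2 := by
      calc (D'.card:ℝ) * R^2 = ∑ _s ∈ D', R^2 := by rw [Finset.sum_const, nsmul_eq_mul]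
        _ ≤ ∑ s ∈ D', ((fib Δ s).card:ℝ)^2 := by
            apply Finset.sum_le_sum
            intro s hs
            exact pow_le_pow_left₀ hR0.le (hfibR s hs).1 2
    have hσε : (256:ℝ)*(J:ℝ)^3 ≤ m ^ σ * m ^ ε := by
      have h1 : (1:ℝ) ≤ m ^ σ := Real.one_le_rpow hm1' hσ.le
      have h2 : (0:ℝ) ≤ m ^ ε := Real.rpow_nonneg hm0.le _
      calc (256:ℝ)*(J:ℝ)^3 ≤ m ^ ε := hJgrow
        _ = 1 * m ^ ε := (one_mul _).symm
        _ ≤ m ^ σ * m ^ ε := mul_le_mul_of_nonneg_right h1 h2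
    have hmass0 : (0:ℝ) ≤ ∑ s ∈ D', ((fib Δ s).card:ℝ) :=
      Finset.sum_nonneg fun s _ => Nat.cast_nonneg _
    have henergy0 : (0:ℝ) ≤ ∑ s ∈ D', ((fib Δ s).card:ℝ)^2 :=
      Finset.sum_nonneg fun s _ => sq_nonneg _
    have hchain : m ^ ((2:ℝ)+τ-σ) ≤ 64*(J:ℝ)^3 * (Q^2 * (D'.card:ℝ)) := by
      calc m ^ ((2:ℝ)+τ-σ) ≤ 64 * (J:ℝ)^2 * Q^2 * (S'.card:ℝ) := hNS
        _ ≤ 64 * (J:ℝ)^2 * Q^2 * ((D'.card:ℝ) * (J:ℝ)) :=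
            mul_le_mul_of_nonneg_left hJD
              (mul_nonneg (mul_nonneg (by norm_num) (pow_nonneg (by linarith) 2))
                (pow_nonneg hQ0.le 2))
        _ = 64*(J:ℝ)^3 * (Q^2 * (D'.card:ℝ)) := by ring
    have h128 : (128:ℝ)*(J:ℝ)^3 ≤ m ^ σ * m ^ ε := by linarith [hσε, hJ3nn]
    refine ⟨α - μ + 2*σ + ε, R, D', le_refl _, hR1,
      fun x hx => ⟨(hfibR x hx).1, (hfibR x hx).2⟩, ?_, ?_⟩
    · -- mass bound
      have key : m ^ ((2:ℝ) - (α - μ + 2*σ + ε)) * (m ^ (τ+α-μ) * (m^σ * m^ε))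
          ≤ (∑ s ∈ D', ((fib Δ s).card:ℝ)) * (m ^ (τ+α-μ) * (m^σ * m^ε)) := by
        have e1 : m ^ ((2:ℝ) - (α - μ + 2*σ + ε)) * (m ^ (τ+α-μ) * (m^σ * m^ε))
            = m ^ ((2:ℝ)+τ-σ) := by rw [hrp, hrp, hrp]; congr 1; ring
        rw [e1]
        have hQD : Q * (D'.card:ℝ) ≤ 2*R*(D'.card:ℝ) :=
          mul_le_mul_of_nonneg_right hQ2R hD'c0
        have hRD0 : (0:ℝ) ≤ R*(D'.card:ℝ) := mul_nonneg hR0.le hD'c0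
        have hmσε0 : (0:ℝ) ≤ m^σ * m^ε :=
          mul_nonneg (Real.rpow_nonneg hm0.le _) (Real.rpow_nonneg hm0.le _)
        calc m ^ ((2:ℝ)+τ-σ) ≤ 64*(J:ℝ)^3 * (Q^2 * (D'.card:ℝ)) := hchain
          _ = 64*(J:ℝ)^3 * Q * (Q * (D'.card:ℝ)) := by ring
          _ ≤ 64*(J:ℝ)^3 * Q * (2*R*(D'.card:ℝ)) :=
              mul_le_mul_of_nonneg_left hQD
                (mul_nonneg (mul_nonneg (by norm_num) hJ3nn) hQ0.le)
          _ = (128*(J:ℝ)^3) * (Q * (R*(D'.card:ℝ))) := by ring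
          _ ≤ (m^σ * m^ε) * (Q * (R*(D'.card:ℝ))) :=
              mul_le_mul_of_nonneg_right h128 (mul_nonneg hQ0.le hRD0)
          _ = (m^σ * m^ε) * Q * (R*(D'.card:ℝ)) := by ring
          _ ≤ (m^σ * m^ε) * m ^ (τ+α-μ) * (R*(D'.card:ℝ)) :=
              mul_le_mul_of_nonneg_right
                (mul_le_mul_of_nonneg_left hcase.le hmσε0) hRD0
          _ ≤ (m^σ * m^ε) * m ^ (τ+α-μ) * (∑ s ∈ D', ((fib Δ s).card:ℝ)) := by
              apply mul_le_mul_of_nonneg_left _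
                (mul_nonneg hmσε0 (Real.rpow_nonneg hm0.le _))
              calc R*(D'.card:ℝ) = (D'.card:ℝ)*R := by ring
                _ ≤ ∑ s ∈ D', ((fib Δ s).card:ℝ) := hmassR
          _ = (∑ s ∈ D', ((fib Δ s).card:ℝ)) * (m ^ (τ+α-μ) * (m^σ * m^ε)) := by ring
      exact le_of_mul_le_mul_right key
        (mul_pos (Real.rpow_pos_of_pos hm0 _)
          (mul_pos (Real.rpow_pos_of_pos hm0 _) (Real.rpow_pos_of_pos hm0 _)))
    · -- energy bound
      have key : m ^ ((2:ℝ) + τ - 2*σ - ε) * (m^σ * m^ε)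
          ≤ (∑ s ∈ D', ((fib Δ s).card:ℝ)^2) * (m^σ * m^ε) := by
        have e1 : m ^ ((2:ℝ) + τ - 2*σ - ε) * (m^σ * m^ε) = m ^ ((2:ℝ)+τ-σ) := by
          rw [hrp, hrp]; congr 1; ring
        rw [e1]
        have hQ2sq : Q^2 ≤ 4*R^2 := by
          have h1 : Q^2 ≤ (2*R)^2 := pow_le_pow_left₀ hQ0.le hQ2R 2
          calc Q^2 ≤ (2*R)^2 := h1
            _ = 4*R^2 := by ring
        have hQD : Q^2 * (D'.card:ℝ) ≤ 4*R^2*(D'.card:ℝ) :=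
          mul_le_mul_of_nonneg_right hQ2sq hD'c0
        calc m ^ ((2:ℝ)+τ-σ) ≤ 64*(J:ℝ)^3 * (Q^2 * (D'.card:ℝ)) := hchain
          _ ≤ 64*(J:ℝ)^3 * (4*R^2*(D'.card:ℝ)) :=
              mul_le_mul_of_nonneg_left hQD (mul_nonneg (by norm_num) hJ3nn)
          _ = (256*(J:ℝ)^3) * (R^2*(D'.card:ℝ)) := by ring
          _ ≤ (m^σ * m^ε) * (R^2*(D'.card:ℝ)) :=
              mul_le_mul_of_nonneg_right hσε (mul_nonneg (sq_nonneg _) hD'c0)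
          _ ≤ (m^σ * m^ε) * (∑ s ∈ D', ((fib Δ s).card:ℝ)^2) := by
              apply mul_le_mul_of_nonneg_left _
                (mul_nonneg (Real.rpow_nonneg hm0.le _) (Real.rpow_nonneg hm0.le _))
              calc R^2*(D'.card:ℝ) = (D'.card:ℝ)*R^2 := by ring
                _ ≤ ∑ s ∈ D', ((fib Δ s).card:ℝ)^2 := henergyR
          _ = (∑ s ∈ D', ((fib Δ s).card:ℝ)^2) * (m^σ * m^ε) := by ring
      exact le_of_mul_le_mul_right key
        (mul_pos (Real.rpow_pos_of_pos hm0 _) (Real.rpow_pos_of_pos hm0 _))
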